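/- If a configuration σ is a local minimum of the anisotropic Ising Hamiltonian H^A, i.e. H^A(σ^x) > H^A(σ) for every single-site flip σ^x with x ∈ Λ, then the (+1)-sites of σ form a union of pairwise isolated rectangles (rectangles possibly wrapping around the torus; ⊟ is the empty union). -/

import Mathlib

open scoped Classical

/-- A site of the two-dimensional discrete torus of side length `L`. -/
abbrev Site (L : ℕ) := ZMod L × ZMod L

/-- A configuration, identified with its set of `(+1)`-sites. -/
abbrev Config (L : ℕ) := Finset (Site L)

/-- The spin value (`+1` or `-1`) of a configuration at a site. -/
noncomputable def spin {L : ℕ} (σ : Config L) (x : Site L) : ℝ :=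
  if x ∈ σ then 1 else -1

/-- The configuration obtained by flipping the spin at site `x`. -/
def flipSpin {L : ℕ} (σ : Config L) (x : Site L) : Config L :=
  if x ∈ σ then σ.erase x else insert x σ

/-- Two configurations are adjacent if they differ at exactly one site. -/
def Adjacent {L : ℕ} (σ σ' : Config L) : Prop := ∃ x, σ' = flipSpin σ x

/-- `γ` is a path from `σ` to `σ'`: a finite sequence of configurations starting at `σ`,
ending at `σ'`, in which consecutive configurations are adjacent. -/
def IsPath {L : ℕ} (σ σ' : Config L) (γ : List (Config L)) : Prop :=
  γ.head? = some σ ∧ γ.getLast? = some σ' ∧ γ.Chain' Adjacent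

/-- The communication height `Φ(σ,σ')` for the Hamiltonian `H`: the minimum over paths
`γ : σ → σ'` of the maximal energy along `γ`. -/
noncomputable def commHeight {L : ℕ} (H : Config L → ℝ) (σ σ' : Config L) : ℝ :=
  sInf { M | ∃ γ : List (Config L), IsPath σ σ' γ ∧ ∀ η ∈ γ, H η ≤ M }

/-- A path is optimal if its maximal energy attains the communication height. -/
def IsOptimalPath {L : ℕ} (H : Config L → ℝ) (σ σ' : Config L) (γ : List (Config L)) : Prop :=
  IsPath σ σ' γ ∧ ∀ η ∈ γ, H η ≤ commHeight H σ σ'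

/-- The all-`(-1)` configuration `⊟`. -/
def boxMinus (L : ℕ) : Config L := ∅

/-- The all-`(+1)` configuration `⊞`. -/
def boxPlus (L : ℕ) [NeZero L] : Config L := Finset.univ

/-- Two sites are nearest neighbours on the torus. -/
def SiteAdj {L : ℕ} (x y : Site L) : Prop :=
  y = x + (1, 0) ∨ y = x + (-1, 0) ∨ y = x + (0, 1) ∨ y = x + (0, -1)

/-- `x` and `y` are connected inside the set of `(+1)`-sites of `σ` by a
nearest-neighbour chain. -/
def ConnectedIn {L : ℕ} (σ : Config L) (x y : Site L) : Prop :=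
  Relation.ReflTransGen (fun u v => u ∈ σ ∧ v ∈ σ ∧ SiteAdj u v) x y

/-- The connected component of the `(+1)`-sites of `σ` containing `x`. -/
noncomputable def component {L : ℕ} (σ : Config L) (x : Site L) : Config L :=
  σ.filter fun y => ConnectedIn σ x y

/-- `σ` consists of a single (nonempty) connected component of `(+1)`-sites. -/
def IsSingleDroplet {L : ℕ} (σ : Config L) : Prop :=
  σ.Nonempty ∧ ∀ x ∈ σ, ∀ y ∈ σ, ConnectedIn σ x y

/-- Two droplets are isolated: their Euclidean distance is at least `√2`, i.e. no site of
one is a nearest neighbour of a site of the other. -/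
def Isolated {L : ℕ} (A B : Config L) : Prop :=
  ∀ x ∈ A, ∀ y ∈ B, ¬ SiteAdj x y

/-- The rectangle on the torus with lower-left corner `a`, horizontal side `l₁` and
vertical side `l₂`. -/
def rectC {L : ℕ} (a : Site L) (l₁ l₂ : ℕ) : Config L :=
  (Finset.range l₁ ×ˢ Finset.range l₂).image
    fun p => a + ((p.1 : ZMod L), (p.2 : ZMod L))

/-- The horizontal side length `P_H R(σ)` of the rectangular envelope of `σ`. -/
noncomputable def PH {L : ℕ} (σ : Config L) : ℕ :=
  sInf { l | ∃ c : ZMod L, ∀ x ∈ σ, ∃ i < l, x.1 = c + (i : ZMod L) }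

/-- The vertical side length `P_V R(σ)` of the rectangular envelope of `σ`. -/
noncomputable def PV {L : ℕ} (σ : Config L) : ℕ :=
  sInf { l | ∃ c : ZMod L, ∀ x ∈ σ, ∃ i < l, x.2 = c + (i : ZMod L) }

/-- `σ` does not wrap around the torus horizontally: some column is empty. -/
def NoWrapH {L : ℕ} (σ : Config L) : Prop := ∃ c : ZMod L, ∀ x ∈ σ, x.1 ≠ c

/-- `σ` does not wrap around the torus vertically: some row is empty. -/
def NoWrapV {L : ℕ} (σ : Config L) : Prop := ∃ c : ZMod L, ∀ x ∈ σ, x.2 ≠ c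

/-- `R` is the rectangular envelope of `σ`: the smallest rectangle on the torus
containing the `(+1)`-sites of `σ`. -/
def IsEnvelope {L : ℕ} (σ R : Config L) : Prop :=
  (∃ a l₁ l₂, R = rectC a l₁ l₂) ∧ σ ⊆ R ∧
    ∀ R' : Config L, (∃ a l₁ l₂, R' = rectC a l₁ l₂) → σ ⊆ R' → R.card ≤ R'.card

/-- The set `R(l₁, l₂) = R(l₁ × l₂) ∪ R(l₂ × l₁)` of single rectangles with side
lengths `l₁` and `l₂`. -/
def RSet {L : ℕ} (l₁ l₂ : ℕ) (σ : Config L) : Prop :=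
  (∃ a : Site L, σ = rectC a l₁ l₂) ∨ (∃ a : Site L, σ = rectC a l₂ l₁)

/-- The set `R(l−1, l)^{1pr}`: a rectangle with sides `l−1` and `l` together with one
protuberance attached to one of its longer sides. -/
def RSet1pr {L : ℕ} (l : ℕ) (σ : Config L) : Prop :=
  (∃ a : Site L, ∃ j < l,
      σ = insert (a + ((-1 : ZMod L), (j : ZMod L))) (rectC a (l - 1) l) ∨
      σ = insert (a + (((l - 1 : ℕ) : ZMod L), (j : ZMod L))) (rectC a (l - 1) l)) ∨
  (∃ a : Site L, ∃ j < l,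
      σ = insert (a + ((j : ZMod L), (-1 : ZMod L))) (rectC a l (l - 1)) ∨
      σ = insert (a + ((j : ZMod L), ((l - 1 : ℕ) : ZMod L))) (rectC a l (l - 1)))

/-- The anisotropic Ising Hamiltonian `H^A`. -/
noncomputable def HA {L : ℕ} [NeZero L] (JH JV h : ℝ) (σ : Config L) : ℝ :=
  - (JH / 2) * ∑ x : Site L, spin σ x * spin σ (x + (1, 0))
  - (JV / 2) * ∑ x : Site L, spin σ x * spin σ (x + (0, 1))
  - (h / 2) * ∑ x : Site L, spin σ x

/-- The next-nearest-neighbour Ising Hamiltonian `H^NN`. -/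
noncomputable def HNN {L : ℕ} [NeZero L] (Jt K h : ℝ) (σ : Config L) : ℝ :=
  - (Jt / 2) * ((∑ x : Site L, spin σ x * spin σ (x + (1, 0)))
      + ∑ x : Site L, spin σ x * spin σ (x + (0, 1)))
  - (K / 2) * ((∑ x : Site L, spin σ x * spin σ (x + (1, 1)))
      + ∑ x : Site L, spin σ x * spin σ (x + (1, -1)))
  - (h / 2) * ∑ x : Site L, spin σ x

/-- The octagon `Q(Dn, Dw; ℓ_ne, ℓ_nw, ℓ_sw, ℓ_se)` with lower-left corner `a`, obtained
from the `Dn × Dw` rectangle by cutting `ℓ_a − 1` oblique bars from corner `a`. -/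
def octagon {L : ℕ} (a : Site L) (Dn Dw lne lnw lsw lse : ℕ) : Config L :=
  ((Finset.range Dn ×ˢ Finset.range Dw).filter fun p =>
      lsw ≤ p.1 + p.2 + 1 ∧ lse ≤ (Dn - 1 - p.1) + p.2 + 1 ∧
      lnw ≤ p.1 + (Dw - 1 - p.2) + 1 ∧ lne ≤ (Dn - 1 - p.1) + (Dw - 1 - p.2) + 1).image
    fun p => a + ((p.1 : ZMod L), (p.2 : ZMod L))

/-- The set `Q(Dn, Dw)` of octagons with side lengths `Dn`, `Dw`, all oblique edge lengths
equal to `l` (including rotations and translations). -/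
def QSet {L : ℕ} (Dn Dw l : ℕ) (σ : Config L) : Prop :=
  (∃ a : Site L, σ = octagon a Dn Dw l l l l) ∨
  (∃ a : Site L, σ = octagon a Dw Dn l l l l)

/-- The set `Q(D − 1, D)^{1pr}`: an octagon from `Q(D − 1, D; l)` together with one
protuberance attached at the interior of one of its longest coordinate edges. -/
def Q1pr {L : ℕ} (D l : ℕ) (σ : Config L) : Prop :=
  (∃ a : Site L, ∃ j : ℕ, l ≤ j ∧ j + l + 1 ≤ D ∧
      (σ = insert (a + ((-1 : ZMod L), (j : ZMod L))) (octagon a (D - 1) D l l l l) ∨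
       σ = insert (a + (((D - 1 : ℕ) : ZMod L), (j : ZMod L))) (octagon a (D - 1) D l l l l))) ∨
  (∃ a : Site L, ∃ j : ℕ, l ≤ j ∧ j + l + 1 ≤ D ∧
      (σ = insert (a + ((j : ZMod L), (-1 : ZMod L))) (octagon a D (D - 1) l l l l) ∨
       σ = insert (a + ((j : ZMod L), ((D - 1 : ℕ) : ZMod L))) (octagon a D (D - 1) l l l l)))

/-- A stable octagon: all four coordinate edges and all four oblique edges have
length at least 2. -/
def IsStableOctagon {L : ℕ} (σ : Config L) : Prop :=
  ∃ a : Site L, ∃ Dn Dw lne lnw lsw lse : ℕ,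
    2 ≤ lne ∧ 2 ≤ lnw ∧ 2 ≤ lsw ∧ 2 ≤ lse ∧
    lne + lnw ≤ Dn ∧ lsw + lse ≤ Dn ∧ lnw + lsw ≤ Dw ∧ lne + lse ≤ Dw ∧
    σ = octagon a Dn Dw lne lnw lsw lse

/-- A rectangle that wraps around the torus. -/
def IsWrappingRect {L : ℕ} (σ : Config L) : Prop :=
  ∃ a : Site L, ∃ l₁ l₂ : ℕ, 1 ≤ l₁ ∧ l₁ ≤ L ∧ 1 ≤ l₂ ∧ l₂ ≤ L ∧ (l₁ = L ∨ l₂ = L) ∧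
    σ = rectC a l₁ l₂

/-- The Hamiltonian `H^±` of the Ising model with alternating magnetic field. -/
noncomputable def Hpm {L : ℕ} [NeZero L] (J hodd heven : ℝ) (σ : Config L) : ℝ :=
  - (J / 2) * ((∑ x : Site L, spin σ x * spin σ (x + (1, 0)))
      + ∑ x : Site L, spin σ x * spin σ (x + (0, 1)))
  + (hodd / 2) * ∑ x ∈ Finset.univ.filter (fun x : Site L => x.2.val % 2 = 1), spin σ x
  - (heven / 2) * ∑ x ∈ Finset.univ.filter (fun x : Site L => x.2.val % 2 = 0), spin σ x

/-- A stable rectangle for the alternating-field model: horizontal side `l₁ ≥ 2`,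
odd vertical side `l₂ ≥ 3`, bottom (and hence top) row in the even rows. -/
def IsStableRect {L : ℕ} (σ : Config L) : Prop :=
  ∃ a : Site L, ∃ l₁ l₂ : ℕ, 2 ≤ l₁ ∧ l₁ ≤ L ∧ 3 ≤ l₂ ∧ l₂ ≤ L ∧ Odd l₂ ∧
    a.2.val % 2 = 0 ∧ σ = rectC a l₁ l₂

/-- A configuration in `P₁` with protuberance at `p`: an `(lb−1) × lh` rectangle with
bottom and top rows in the even rows, plus a protuberance `p` attached to one of the
longer (vertical) sides in an even row. -/
def P1at {L : ℕ} (lb lh : ℕ) (σ : Config L) (p : Site L) : Prop :=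
  ∃ a : Site L, a.2.val % 2 = 0 ∧ ∃ j : ℕ, j < lh ∧ j % 2 = 0 ∧
    (p = a + ((-1 : ZMod L), (j : ZMod L)) ∨
     p = a + (((lb - 1 : ℕ) : ZMod L), (j : ZMod L))) ∧
    σ = insert p (rectC a (lb - 1) lh)

/-- The set `P₁`. -/
def P1 {L : ℕ} (lb lh : ℕ) (σ : Config L) : Prop := ∃ p : Site L, P1at lb lh σ p

/-- The set `C₁`: obtained from a configuration in `P₁` by adding a second `(+1)`-spin
in an odd row adjacent to the protuberance. -/
def C1 {L : ℕ} (lb lh : ℕ) (σ : Config L) : Prop :=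
  ∃ σ' : Config L, ∃ p : Site L, P1at lb lh σ' p ∧
    (σ = insert (p + ((0 : ZMod L), (1 : ZMod L))) σ' ∨
     σ = insert (p + ((0 : ZMod L), (-1 : ZMod L))) σ')

/-- The set `P₂`: an `lb × (lh−2)` rectangle with bottom and top rows in the even rows,
plus a vertical or horizontal bar of length 2 attached above or below. -/
def P2 {L : ℕ} (lb lh : ℕ) (σ : Config L) : Prop :=
  ∃ a : Site L, a.2.val % 2 = 0 ∧
    ((∃ i : ℕ, i < lb ∧
        σ = insert (a + ((i : ZMod L), ((lh - 2 : ℕ) : ZMod L)))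
            (insert (a + ((i : ZMod L), ((lh - 1 : ℕ) : ZMod L))) (rectC a lb (lh - 2)))) ∨
     (∃ i : ℕ, i + 2 ≤ lb ∧
        σ = insert (a + ((i : ZMod L), ((lh - 2 : ℕ) : ZMod L)))
            (insert (a + (((i + 1 : ℕ) : ZMod L), ((lh - 2 : ℕ) : ZMod L)))
              (rectC a lb (lh - 2)))) ∨
     (∃ i : ℕ, i < lb ∧
        σ = insert (a + ((i : ZMod L), (-1 : ZMod L)))
            (insert (a + ((i : ZMod L), (-2 : ZMod L))) (rectC a lb (lh - 2)))) ∨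
     (∃ i : ℕ, i + 2 ≤ lb ∧
        σ = insert (a + ((i : ZMod L), (-1 : ZMod L)))
            (insert (a + (((i + 1 : ℕ) : ZMod L), (-1 : ZMod L))) (rectC a lb (lh - 2)))))

/-- The set `C₂`: an `lb × (lh−2)` rectangle with bottom and top rows in the even rows,
plus, above or below it, a vertical bar of length 2 together with a `(+1)`-spin
adjacent to the bar in an odd row. -/
def C2 {L : ℕ} (lb lh : ℕ) (σ : Config L) : Prop :=
  ∃ a : Site L, a.2.val % 2 = 0 ∧
    ((∃ i : ℕ, i < lb ∧ ∃ s : ZMod L, (s = 1 ∨ s = -1) ∧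
        σ = insert (a + ((i : ZMod L) + s, ((lh - 2 : ℕ) : ZMod L)))
            (insert (a + ((i : ZMod L), ((lh - 2 : ℕ) : ZMod L)))
              (insert (a + ((i : ZMod L), ((lh - 1 : ℕ) : ZMod L))) (rectC a lb (lh - 2))))) ∨
     (∃ i : ℕ, i < lb ∧ ∃ s : ZMod L, (s = 1 ∨ s = -1) ∧
        σ = insert (a + ((i : ZMod L) + s, (-1 : ZMod L)))
            (insert (a + ((i : ZMod L), (-1 : ZMod L)))
              (insert (a + ((i : ZMod L), (-2 : ZMod L))) (rectC a lb (lh - 2))))))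

section Aux
variable {L : ℕ}

def NoCorner (σ : Config L) : Prop :=
  ∀ z : Site L, z ∉ σ → ∀ u ∈ σ, ∀ v ∈ σ,
    (u = z + ((1 : ZMod L), (0 : ZMod L)) ∨ u = z + ((-1 : ZMod L), (0 : ZMod L))) →
    (v = z + ((0 : ZMod L), (1 : ZMod L)) ∨ v = z + ((0 : ZMod L), (-1 : ZMod L))) → False

lemma spin_insert_of_not_mem {σ : Config L} {x : Site L} (hx : x ∉ σ) (y : Site L) :
    spin (insert x σ) y = if y = x then 1 else spin σ y := by
  unfold spin
  by_cases hy : y = x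
  · subst hy; simp
  · simp [hy, Finset.mem_insert]

lemma spin_le_one (σ : Config L) (y : Site L) : spin σ y ≤ 1 := by
  unfold spin; split <;> norm_num

lemma neg_one_le_spin (σ : Config L) (y : Site L) : -1 ≤ spin σ y := by
  unfold spin; split <;> norm_num

lemma sum_prod_flip [NeZero L] {σ : Config L} {z : Site L} (hz : z ∉ σ) (e : Site L)
    (he : e ≠ 0) :
    ∑ y : Site L, spin (insert z σ) y * spin (insert z σ) (y + e)
      = (∑ y : Site L, spin σ y * spin σ (y + e))
        + (2 * spin σ (z + e) + 2 * spin σ (z - e)) := by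
  have hzz : z - e ≠ z := by
    intro hcontra; apply he; have := sub_eq_self.mp hcontra; simpa using this
  have hze : z + e ≠ z := by
    intro hcontra; apply he; simpa using (add_eq_left.mp hcontra)
  set F' : Site L → ℝ := fun y => spin (insert z σ) y * spin (insert z σ) (y + e) with hF'
  set F : Site L → ℝ := fun y => spin σ y * spin σ (y + e) with hF
  have key : ∀ y : Site L, y ≠ z → y ≠ z - e → F' y = F y := by
    intro y h1 h2
    have h3 : y + e ≠ z := by
      intro hc; exact h2 (by rw [← hc]; simp)
    simp only [hF', hF, spin_insert_of_not_mem hz, if_neg h1, if_neg h3]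
  have hsub : ∑ y : Site L, (F' y - F y)
      = ∑ y ∈ ({z, z - e} : Finset (Site L)), (F' y - F y) := by
    refine (Finset.sum_subset (Finset.subset_univ _) ?_).symm
    intro y _ hy
    simp only [Finset.mem_insert, Finset.mem_singleton, not_or] at hy
    rw [key y hy.1 hy.2]; ring
  have hpair : ∑ y ∈ ({z, z - e} : Finset (Site L)), (F' y - F y)
      = (F' z - F z) + (F' (z - e) - F (z - e)) := by
    rw [Finset.sum_pair (Ne.symm hzz)]
  have hspinz : spin σ z = -1 := by unfold spin; simp [hz]
  have e1 : F' z - F z = 2 * spin σ (z + e) := by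
    simp only [hF', hF, spin_insert_of_not_mem hz, if_pos rfl, if_neg hze, hspinz, if_true]
    ring
  have e2 : F' (z - e) - F (z - e) = 2 * spin σ (z - e) := by
    have : z - e + e = z := by ring
    simp only [hF', hF, spin_insert_of_not_mem hz, if_neg hzz, this, if_pos rfl, hspinz, if_true]
    ring
  have := Finset.sum_sub_distrib (f := F') (g := F) (s := (Finset.univ : Finset (Site L)))
  rw [hsub, hpair, e1, e2] at this
  linarith [this]

lemma sum_spin_flip [NeZero L] {σ : Config L} {z : Site L} (hz : z ∉ σ) :
    ∑ y : Site L, spin (insert z σ) y = (∑ y : Site L, spin σ y) + 2 := by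
  have hsub : ∑ y : Site L, (spin (insert z σ) y - spin σ y)
      = ∑ y ∈ ({z} : Finset (Site L)), (spin (insert z σ) y - spin σ y) := by
    refine (Finset.sum_subset (Finset.subset_univ _) ?_).symm
    intro y _ hy
    simp only [Finset.mem_singleton] at hy
    rw [spin_insert_of_not_mem hz, if_neg hy]; ring
  have hspinz : spin σ z = -1 := by unfold spin; simp [hz]
  rw [Finset.sum_singleton, spin_insert_of_not_mem hz, if_pos rfl, hspinz] at hsub
  have := Finset.sum_sub_distrib (f := fun y => spin (insert z σ) y) (g := spin σ)
    (s := (Finset.univ : Finset (Site L)))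
  rw [hsub] at this
  linarith [this]

lemma noCorner_of_localMin [NeZero L] {JH JV h : ℝ} (hJHV : JV < JH) (hh0 : 0 < h)
    (hh : h < 2 * JV) {σ : Config L}
    (hmin : ∀ x : Site L, HA JH JV h σ < HA JH JV h (flipSpin σ x)) :
    NoCorner σ := by
  intro z hz u hu v hv hud hvd
  by_cases h1 : (1 : ZMod L) = 0
  · have : u = z := by
      have h0 : (-1 : ZMod L) = 0 := neg_eq_zero.mpr h1
      rcases hud with rfl | rfl <;> simp [Prod.ext_iff, h1, h0]
    exact hz (this ▸ hu)
  · have he1 : ((1 : ZMod L), (0 : ZMod L)) ≠ 0 := by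
      simp [Prod.ext_iff, h1]
    have he2 : ((0 : ZMod L), (1 : ZMod L)) ≠ 0 := by
      simp [Prod.ext_iff, h1]
    have hflip : flipSpin σ z = insert z σ := by unfold flipSpin; simp [hz]
    have hm := hmin z
    rw [hflip] at hm
    have hH1 := sum_prod_flip hz ((1 : ZMod L), (0 : ZMod L)) he1
    have hH2 := sum_prod_flip hz ((0 : ZMod L), (1 : ZMod L)) he2
    have hH3 := sum_spin_flip hz
    unfold HA at hm
    rw [hH1, hH2, hH3] at hm
    -- hm : ... < ...
    have hE : spin σ (z + ((1:ZMod L),(0:ZMod L))) + spin σ (z - ((1:ZMod L),(0:ZMod L))) ≥ 0 := by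
      rcases hud with rfl | rfl
      · have : spin σ (z + ((1:ZMod L),(0:ZMod L))) = 1 := by unfold spin; simp [hu]
        have h2 := neg_one_le_spin σ (z - ((1:ZMod L),(0:ZMod L)))
        linarith
      · have hw : z - ((1:ZMod L),(0:ZMod L)) = z + ((-1:ZMod L),(0:ZMod L)) := by
          rw [sub_eq_add_neg]; norm_num
        have : spin σ (z - ((1:ZMod L),(0:ZMod L))) = 1 := by
          rw [hw]; unfold spin; simp [hu]
        have h2 := neg_one_le_spin σ (z + ((1:ZMod L),(0:ZMod L)))
        linarith
    have hN : spin σ (z + ((0:ZMod L),(1:ZMod L))) + spin σ (z - ((0:ZMod L),(1:ZMod L))) ≥ 0 := by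
      rcases hvd with rfl | rfl
      · have : spin σ (z + ((0:ZMod L),(1:ZMod L))) = 1 := by unfold spin; simp [hv]
        have h2 := neg_one_le_spin σ (z - ((0:ZMod L),(1:ZMod L)))
        linarith
      · have hw : z - ((0:ZMod L),(1:ZMod L)) = z + ((0:ZMod L),(-1:ZMod L)) := by
          rw [sub_eq_add_neg]; norm_num
        have : spin σ (z - ((0:ZMod L),(1:ZMod L))) = 1 := by
          rw [hw]; unfold spin; simp [hv]
        have h2 := neg_one_le_spin σ (z + ((0:ZMod L),(1:ZMod L)))
        linarith
    have hJV0 : 0 < JV := by linarith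
    have hJH0 : 0 < JH := by linarith
    nlinarith [hm, hE, hN]

end Aux

section Comb
variable {L : ℕ}

/-- integer-coordinate parametrisation of the torus around `x`. -/
def gp (x : Site L) (i j : ℤ) : Site L := x + (((i : ℤ) : ZMod L), ((j : ℤ) : ZMod L))

lemma gp_zero (x : Site L) : gp x 0 0 = x := by simp [gp]

lemma gp_add (x : Site L) (i j di dj : ℤ) :
    gp x (i + di) (j + dj) = gp x i j + (((di : ℤ) : ZMod L), ((dj : ℤ) : ZMod L)) := by
  simp only [gp, Prod.ext_iff, Prod.fst_add, Prod.snd_add]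
  constructor <;> push_cast <;> ring

lemma gp_add_right (x : Site L) (i j : ℤ) : gp x (i + 1) j = gp x i j + (1, 0) := by
  have := gp_add x i j 1 0
  simpa using this

lemma gp_add_left (x : Site L) (i j : ℤ) : gp x (i - 1) j = gp x i j + (-1, 0) := by
  have := gp_add x i j (-1) 0
  simp only [Int.cast_neg, Int.cast_one, Int.cast_zero, add_zero] at this
  rw [sub_eq_add_neg]; exact this

lemma gp_add_up (x : Site L) (i j : ℤ) : gp x i (j + 1) = gp x i j + (0, 1) := by
  have := gp_add x i j 0 1
  simpa using this

lemma gp_add_down (x : Site L) (i j : ℤ) : gp x i (j - 1) = gp x i j + (0, -1) := by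
  have := gp_add x i j 0 (-1)
  simp only [Int.cast_neg, Int.cast_one, Int.cast_zero, add_zero] at this
  rw [sub_eq_add_neg]; exact this

lemma gp_period (x : Site L) (i j k : ℤ) : gp x (i + k * L) j = gp x i j := by
  simp only [gp, Prod.ext_iff]
  constructor
  · push_cast
    simp [ZMod.natCast_self]
  · rfl

lemma siteAdj_gp_iff {x : Site L} {i j : ℤ} {w : Site L} :
    SiteAdj (gp x i j) w ↔
      w = gp x (i + 1) j ∨ w = gp x (i - 1) j ∨ w = gp x i (j + 1) ∨ w = gp x i (j - 1) := by
  rw [SiteAdj, gp_add_right, gp_add_left, gp_add_up, gp_add_down]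

lemma align {σ : Config L} (hK : NoCorner σ) {x : Site L} {i j : ℤ} {εi εj : ℤ}
    (hεi : εi = 1 ∨ εi = -1) (hεj : εj = 1 ∨ εj = -1)
    (h1 : gp x i j ∈ σ) (h2 : gp x i (j + εj) ∈ σ) (h3 : gp x (i + εi) j ∈ σ) :
    gp x (i + εi) (j + εj) ∈ σ := by
  by_contra hc
  refine hK (gp x (i + εi) (j + εj)) hc (gp x i (j + εj)) h2 (gp x (i + εi) j) h3 ?_ ?_
  · rcases hεi with rfl | rfl
    · right
      rw [show i = (i + 1) - 1 by ring, gp_add_left]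
      ring_nf
    · left
      rw [show i = (i + -1) + 1 by ring, gp_add_right]
      ring_nf
  · rcases hεj with rfl | rfl
    · right
      rw [show j = (j + 1) - 1 by ring, gp_add_down]
      ring_nf
    · left
      rw [show j = (j + -1) + 1 by ring, gp_add_up]
      ring_nf


lemma gp_period_v (x : Site L) (i j k : ℤ) : gp x i (j + k * L) = gp x i j := by
  simp only [gp, Prod.ext_iff]
  refine ⟨rfl, ?_⟩
  push_cast
  simp [ZMod.natCast_self]

lemma interval_structure [NeZero L] {P : ℤ → Prop} (hper : ∀ i k : ℤ, P (i + k * L) ↔ P i)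
    (h0 : P 0) :
    ∃ lo hi : ℤ, lo ≤ 0 ∧ 0 ≤ hi ∧ hi - lo + 1 ≤ L ∧ (∀ i, lo ≤ i → i ≤ hi → P i) ∧
      (hi - lo + 1 = (L : ℤ) ∨ (¬ P (lo - 1) ∧ ¬ P (hi + 1))) := by
  have hL : 1 ≤ L := Nat.one_le_iff_ne_zero.mpr (NeZero.ne L)
  have hL' : (1 : ℤ) ≤ L := by exact_mod_cast hL
  by_cases hw : ∀ n : ℕ, n < L → P n
  · refine ⟨0, (L : ℤ) - 1, le_refl 0, by omega, by omega, ?_, Or.inl (by ring)⟩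
    intro i h1 h2
    have h3 : i.toNat < L := by omega
    have h4 : ((i.toNat : ℕ) : ℤ) = i := Int.toNat_of_nonneg h1
    rw [← h4]
    exact hw i.toNat h3
  · push_neg at hw
    obtain ⟨n₀, hn₀L, hn₀⟩ := hw
    have hR : ∃ m : ℕ, ¬ P m := ⟨n₀, hn₀⟩
    set r := Nat.find hR with hrdef
    have hrspec : ¬ P r := Nat.find_spec hR
    have hr1 : 1 ≤ r := by
      rcases Nat.eq_zero_or_pos r with h | h
      · exfalso; apply hrspec; rw [h]; exact_mod_cast h0
      · exact h
    have hrP : ∀ m : ℕ, m < r → P m := fun m hm => not_not.mp (Nat.find_min hR hm)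
    have hLex : ∃ m : ℕ, ¬ P (-(m : ℤ)) := by
      refine ⟨L - n₀, ?_⟩
      have hcast : (-(((L - n₀ : ℕ)) : ℤ)) = (n₀ : ℤ) + (-1) * L := by
        push_cast [Nat.cast_sub (le_of_lt hn₀L)]; ring
      rw [hcast, hper]
      exact hn₀
    set l := Nat.find hLex with hldef
    have hlspec : ¬ P (-(l : ℤ)) := Nat.find_spec hLex
    have hl1 : 1 ≤ l := by
      rcases Nat.eq_zero_or_pos l with h | h
      · exfalso; apply hlspec; rw [h]; exact_mod_cast h0
      · exact h
    have hlP : ∀ m : ℕ, m < l → P (-(m : ℤ)) := fun m hm => not_not.mp (Nat.find_min hLex hm)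
    have hint : ∀ i : ℤ, 1 - l ≤ i → i ≤ (r : ℤ) - 1 → P i := by
      intro i h1 h2
      rcases le_or_gt 0 i with h3 | h3
      · have h4 : i.toNat < r := by omega
        have h5 : ((i.toNat : ℕ) : ℤ) = i := Int.toNat_of_nonneg h3
        rw [← h5]; exact hrP i.toNat h4
      · have h4 : (-i).toNat < l := by omega
        have h5 : (-(((-i).toNat : ℕ) : ℤ)) = i := by omega
        rw [← h5]; exact hlP (-i).toNat h4
    have hwidth : (r : ℤ) - 1 - (1 - l) + 1 ≤ L := by
      by_contra hcon
      push_neg at hcon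
      have h1 : P ((r : ℤ) - L) := hint _ (by omega) (by omega)
      have h2 : P ((r : ℤ) - L + 1 * L) := (hper _ 1).mpr h1
      apply hrspec
      have : (r : ℤ) - L + 1 * L = r := by ring
      rwa [this] at h2
    refine ⟨1 - l, (r : ℤ) - 1, by omega, by omega, hwidth, hint, Or.inr ⟨?_, ?_⟩⟩
    · have : (1 : ℤ) - l - 1 = -(l : ℤ) := by ring
      rwa [this]
    · have : (r : ℤ) - 1 + 1 = (r : ℤ) := by ring
      rwa [this]

lemma row_shift {σ : Config L} (hK : NoCorner σ) {x : Site L} {εi εj : ℤ}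
    (hεi : εi = 1 ∨ εi = -1) (hεj : εj = 1 ∨ εj = -1) (i j : ℤ)
    (h0 : gp x i (j + εj) ∈ σ) :
    ∀ n : ℕ, (∀ m : ℕ, m ≤ n → gp x (i + m * εi) j ∈ σ) →
      gp x (i + n * εi) (j + εj) ∈ σ := by
  intro n
  induction n with
  | zero => intro _; simpa using h0
  | succ k ih =>
    intro hm
    have h1 : gp x (i + k * εi) (j + εj) ∈ σ :=
      ih (fun m hm' => hm m (hm'.trans (Nat.le_succ k)))
    have h3 : gp x (i + k * εi + εi) j ∈ σ := by
      have h := hm (k + 1) le_rfl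
      have heq : i + ((k : ℕ) + 1 : ℕ) * εi = i + k * εi + εi := by push_cast; ring
      rwa [heq] at h
    have h4 := align hK hεi hεj (hm k (Nat.le_succ k)) h1 h3
    have heq : i + (k : ℤ) * εi + εi = i + ((k + 1 : ℕ) : ℤ) * εi := by push_cast; ring
    rwa [heq] at h4

lemma next_row {σ : Config L} (hK : NoCorner σ) {x : Site L} {εj : ℤ}
    (hεj : εj = 1 ∨ εj = -1) {j lo hi : ℤ} (hlo : lo ≤ 0) (hhi : 0 ≤ hi)
    (hrow : ∀ i, lo ≤ i → i ≤ hi → gp x i j ∈ σ) (h0' : gp x 0 (j + εj) ∈ σ) :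
    ∀ i, lo ≤ i → i ≤ hi → gp x i (j + εj) ∈ σ := by
  intro i h1 h2
  rcases le_or_gt 0 i with hi0 | hi0
  · have key := row_shift hK (Or.inl rfl) hεj 0 j (by simpa using h0') i.toNat ?_
    · have heq : (0 : ℤ) + (i.toNat : ℤ) * 1 = i := by omega
      rwa [heq] at key
    · intro m hm
      have heq : (0 : ℤ) + (m : ℤ) * 1 = m := by ring
      rw [heq]
      exact hrow m (by omega) (by omega)
  · have key := row_shift hK (Or.inr rfl) hεj 0 j (by simpa using h0') (-i).toNat ?_
    · have heq : (0 : ℤ) + ((-i).toNat : ℤ) * (-1) = i := by omega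
      rwa [heq] at key
    · intro m hm
      have h3 : lo ≤ 0 + (m : ℤ) * (-1) := by omega
      exact hrow _ h3 (by omega)

lemma fill_half {σ : Config L} (hK : NoCorner σ) {x : Site L} {εj : ℤ}
    (hεj : εj = 1 ∨ εj = -1) {lo hi : ℤ} (hlo : lo ≤ 0) (hhi : 0 ≤ hi)
    (hrow0 : ∀ i, lo ≤ i → i ≤ hi → gp x i 0 ∈ σ)
    (b : ℕ) (hcol : ∀ n : ℕ, n ≤ b → gp x 0 (εj * n) ∈ σ) :
    ∀ n : ℕ, n ≤ b → ∀ i, lo ≤ i → i ≤ hi → gp x i (εj * n) ∈ σ := by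
  intro n
  induction n with
  | zero => intro _ i h1 h2; simpa using hrow0 i h1 h2
  | succ k ih =>
    intro hk i h1 h2
    have hrowk := ih (le_of_lt (Nat.lt_of_lt_of_le (Nat.lt_succ_self k) hk))
    have h0' : gp x 0 (εj * k + εj) ∈ σ := by
      have h := hcol (k + 1) hk
      have heq : εj * ((k + 1 : ℕ) : ℤ) = εj * k + εj := by push_cast; ring
      rwa [heq] at h
    have key := next_row hK hεj hlo hhi hrowk h0' i h1 h2
    have heq : εj * (k : ℤ) + εj = εj * ((k + 1 : ℕ) : ℤ) := by push_cast; ring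
    rwa [heq] at key

lemma fill {σ : Config L} (hK : NoCorner σ) {x : Site L} {lo₁ hi₁ lo₂ hi₂ : ℤ}
    (hlo₁ : lo₁ ≤ 0) (hhi₁ : 0 ≤ hi₁) (hlo₂ : lo₂ ≤ 0) (hhi₂ : 0 ≤ hi₂)
    (hrow0 : ∀ i, lo₁ ≤ i → i ≤ hi₁ → gp x i 0 ∈ σ)
    (hcol0 : ∀ j, lo₂ ≤ j → j ≤ hi₂ → gp x 0 j ∈ σ) :
    ∀ i j, lo₁ ≤ i → i ≤ hi₁ → lo₂ ≤ j → j ≤ hi₂ → gp x i j ∈ σ := by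
  intro i j h1 h2 h3 h4
  rcases le_or_gt 0 j with hj0 | hj0
  · have key := fill_half hK (Or.inl rfl) hlo₁ hhi₁ hrow0 hi₂.toNat ?_ j.toNat (by omega) i h1 h2
    · have heq : (1 : ℤ) * (j.toNat : ℤ) = j := by omega
      rwa [heq] at key
    · intro m hm
      have heq : (1 : ℤ) * (m : ℤ) = m := by ring
      rw [heq]
      exact hcol0 m (by omega) (by omega)
  · have key := fill_half hK (Or.inr rfl) hlo₁ hhi₁ hrow0 (-lo₂).toNat ?_ (-j).toNat (by omega) i h1 h2
    · have heq : (-1 : ℤ) * ((-j).toNat : ℤ) = j := by omega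
      rwa [heq] at key
    · intro m hm
      have h5 : lo₂ ≤ (-1 : ℤ) * m := by omega
      exact hcol0 _ h5 (by omega)

lemma boundary_empty_col {σ : Config L} (hK : NoCorner σ) {x : Site L} {c εc εj : ℤ}
    (hεc : εc = 1 ∨ εc = -1) (hεj : εj = 1 ∨ εj = -1) (b : ℕ)
    (hfill : ∀ n : ℕ, n ≤ b → gp x (c - εc) (εj * n) ∈ σ)
    (h0 : gp x c 0 ∉ σ) :
    ∀ n : ℕ, n ≤ b → gp x c (εj * n) ∉ σ := by
  intro n
  induction n with
  | zero => intro _; simpa using h0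
  | succ k ih =>
    intro hk hmem
    have hz : gp x c (εj * k) ∉ σ := ih (le_of_lt (Nat.lt_of_lt_of_le (Nat.lt_succ_self k) hk))
    refine hK (gp x c (εj * k)) hz (gp x (c - εc) (εj * k))
      (hfill k (le_of_lt (Nat.lt_of_lt_of_le (Nat.lt_succ_self k) hk))) (gp x c (εj * ((k + 1 : ℕ) : ℤ))) hmem ?_ ?_
    · rcases hεc with rfl | rfl
      · right; rw [show c - 1 = c - 1 from rfl, gp_add_left]
      · left
        rw [show c - (-1 : ℤ) = c + 1 by ring, gp_add_right]
    · rcases hεj with rfl | rfl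
      · left
        rw [show (1 : ℤ) * ((k + 1 : ℕ) : ℤ) = 1 * k + 1 by push_cast; ring, gp_add_up]
      · right
        rw [show (-1 : ℤ) * ((k + 1 : ℕ) : ℤ) = -1 * k - 1 by push_cast; ring, gp_add_down]

lemma boundary_empty_row {σ : Config L} (hK : NoCorner σ) {x : Site L} {c εc εi : ℤ}
    (hεc : εc = 1 ∨ εc = -1) (hεi : εi = 1 ∨ εi = -1) (b : ℕ)
    (hfill : ∀ n : ℕ, n ≤ b → gp x (εi * n) (c - εc) ∈ σ)
    (h0 : gp x 0 c ∉ σ) :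
    ∀ n : ℕ, n ≤ b → gp x (εi * n) c ∉ σ := by
  intro n
  induction n with
  | zero => intro _; simpa using h0
  | succ k ih =>
    intro hk hmem
    have hz : gp x (εi * k) c ∉ σ := ih (le_of_lt (Nat.lt_of_lt_of_le (Nat.lt_succ_self k) hk))
    refine hK (gp x (εi * k) c) hz (gp x (εi * ((k + 1 : ℕ) : ℤ)) c) hmem
      (gp x (εi * k) (c - εc))
      (hfill k (le_of_lt (Nat.lt_of_lt_of_le (Nat.lt_succ_self k) hk))) ?_ ?_
    · rcases hεi with rfl | rfl
      · left
        rw [show (1 : ℤ) * ((k + 1 : ℕ) : ℤ) = 1 * k + 1 by push_cast; ring, gp_add_right]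
      · right
        rw [show (-1 : ℤ) * ((k + 1 : ℕ) : ℤ) = -1 * k - 1 by push_cast; ring, gp_add_left]
    · rcases hεc with rfl | rfl
      · right; rw [show c - 1 = c - 1 from rfl, gp_add_down]
      · left
        rw [show c - (-1 : ℤ) = c + 1 by ring, gp_add_up]

lemma siteAdj_symm {u v : Site L} (h : SiteAdj u v) : SiteAdj v u := by
  have e1 : ((-1 : ZMod L), (0 : ZMod L)) = -(1, 0) := by simp [Prod.ext_iff]
  have e2 : ((0 : ZMod L), (-1 : ZMod L)) = -(0, 1) := by simp [Prod.ext_iff]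
  rcases h with rfl | rfl | rfl | rfl
  · right; left; rw [e1]; abel
  · left; rw [e1]; abel
  · right; right; right; rw [e2]; abel
  · right; right; left; rw [e2]; abel

lemma connectedIn_symm {σ : Config L} {u v : Site L} (h : ConnectedIn σ u v) :
    ConnectedIn σ v u := by
  refine (@Relation.ReflTransGen.stdSymm _ _ ⟨?_⟩).symm _ _ h
  intro a b hab
  exact ⟨hab.2.1, hab.1, siteAdj_symm hab.2.2⟩

lemma conn_horiz {σ : Config L} {x : Site L} {εi : ℤ} (hεi : εi = 1 ∨ εi = -1) (i j : ℤ) :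
    ∀ n : ℕ, (∀ m : ℕ, m ≤ n → gp x (i + εi * m) j ∈ σ) →
      ConnectedIn σ (gp x i j) (gp x (i + εi * n) j) := by
  intro n
  induction n with
  | zero => intro _; simp only [Nat.cast_zero, mul_zero, add_zero]; exact Relation.ReflTransGen.refl
  | succ k ih =>
    intro hm
    have h1 := ih (fun m hm' => hm m (hm'.trans (Nat.le_succ k)))
    refine h1.tail ⟨hm k (Nat.le_succ k), ?_, ?_⟩
    · have h := hm (k + 1) le_rfl
      exact h
    · rcases hεi with rfl | rfl
      · rw [show i + 1 * ((k + 1 : ℕ) : ℤ) = (i + 1 * k) + 1 by push_cast; ring, gp_add_right]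
        left; rfl
      · rw [show i + (-1) * ((k + 1 : ℕ) : ℤ) = (i + (-1) * k) - 1 by push_cast; ring, gp_add_left]
        right; left; rfl

lemma conn_vert {σ : Config L} {x : Site L} {εj : ℤ} (hεj : εj = 1 ∨ εj = -1) (i j : ℤ) :
    ∀ n : ℕ, (∀ m : ℕ, m ≤ n → gp x i (j + εj * m) ∈ σ) →
      ConnectedIn σ (gp x i j) (gp x i (j + εj * n)) := by
  intro n
  induction n with
  | zero => intro _; simp only [Nat.cast_zero, mul_zero, add_zero]; exact Relation.ReflTransGen.refl
  | succ k ih =>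
    intro hm
    have h1 := ih (fun m hm' => hm m (hm'.trans (Nat.le_succ k)))
    refine h1.tail ⟨hm k (Nat.le_succ k), hm (k + 1) le_rfl, ?_⟩
    rcases hεj with rfl | rfl
    · rw [show j + 1 * ((k + 1 : ℕ) : ℤ) = (j + 1 * k) + 1 by push_cast; ring, gp_add_up]
      right; right; left; rfl
    · rw [show j + (-1) * ((k + 1 : ℕ) : ℤ) = (j + (-1) * k) - 1 by push_cast; ring, gp_add_down]
      right; right; right; rfl


lemma boundary_empty_col' {σ : Config L} (hK : NoCorner σ) {x : Site L} {c εc : ℤ}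
    (hεc : εc = 1 ∨ εc = -1) {lo₂ hi₂ : ℤ} (hlo₂ : lo₂ ≤ 0) (hhi₂ : 0 ≤ hi₂)
    (hfillc : ∀ j, lo₂ ≤ j → j ≤ hi₂ → gp x (c - εc) j ∈ σ)
    (h0 : gp x c 0 ∉ σ) :
    ∀ j, lo₂ ≤ j → j ≤ hi₂ → gp x c j ∉ σ := by
  intro j h1 h2
  rcases le_or_gt 0 j with h3 | h3
  · have key := boundary_empty_col hK hεc (Or.inl rfl) hi₂.toNat (fun n hn => by
      rw [one_mul]; exact hfillc n (by omega) (by omega)) h0 j.toNat (by omega)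
    have heq : (1 : ℤ) * (j.toNat : ℤ) = j := by omega
    rwa [heq] at key
  · have key := boundary_empty_col hK hεc (Or.inr rfl) (-lo₂).toNat (fun n hn => by
      have h4 : lo₂ ≤ (-1 : ℤ) * n := by omega
      exact hfillc _ h4 (by omega)) h0 (-j).toNat (by omega)
    have heq : (-1 : ℤ) * ((-j).toNat : ℤ) = j := by omega
    rwa [heq] at key

lemma boundary_empty_row' {σ : Config L} (hK : NoCorner σ) {x : Site L} {c εc : ℤ}
    (hεc : εc = 1 ∨ εc = -1) {lo₁ hi₁ : ℤ} (hlo₁ : lo₁ ≤ 0) (hhi₁ : 0 ≤ hi₁)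
    (hfillc : ∀ i, lo₁ ≤ i → i ≤ hi₁ → gp x i (c - εc) ∈ σ)
    (h0 : gp x 0 c ∉ σ) :
    ∀ i, lo₁ ≤ i → i ≤ hi₁ → gp x i c ∉ σ := by
  intro i h1 h2
  rcases le_or_gt 0 i with h3 | h3
  · have key := boundary_empty_row hK hεc (Or.inl rfl) hi₁.toNat (fun n hn => by
      rw [one_mul]; exact hfillc n (by omega) (by omega)) h0 i.toNat (by omega)
    have heq : (1 : ℤ) * (i.toNat : ℤ) = i := by omega
    rwa [heq] at key
  · have key := boundary_empty_row hK hεc (Or.inr rfl) (-lo₁).toNat (fun n hn => by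
      have h4 : lo₁ ≤ (-1 : ℤ) * n := by omega
      exact hfillc _ h4 (by omega)) h0 (-i).toNat (by omega)
    have heq : (-1 : ℤ) * ((-i).toNat : ℤ) = i := by omega
    rwa [heq] at key

lemma mem_rectC {a y : Site L} {l₁ l₂ : ℕ} :
    y ∈ rectC a l₁ l₂ ↔
      ∃ p₁ p₂ : ℕ, p₁ < l₁ ∧ p₂ < l₂ ∧ y = a + ((p₁ : ZMod L), (p₂ : ZMod L)) := by
  constructor
  · intro h
    simp only [rectC, Finset.mem_image, Finset.mem_product, Finset.mem_range] at h
    obtain ⟨p, ⟨h1, h2⟩, h3⟩ := h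
    exact ⟨p.1, p.2, h1, h2, h3.symm⟩
  · rintro ⟨p₁, p₂, h1, h2, rfl⟩
    simp only [rectC, Finset.mem_image]
    exact ⟨(p₁, p₂), by simp [Finset.mem_product, h1, h2], rfl⟩

lemma gp_corner_add (x : Site L) (lo₁ lo₂ : ℤ) (p₁ p₂ : ℕ) :
    gp x (lo₁ + (p₁ : ℤ)) (lo₂ + (p₂ : ℤ)) = gp x lo₁ lo₂ + ((p₁ : ZMod L), (p₂ : ZMod L)) := by
  rw [gp_add]
  push_cast
  rfl

theorem component_eq_rect [NeZero L] {σ : Config L} (hK : NoCorner σ) {x : Site L}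
    (hx : x ∈ σ) :
    ∃ a : Site L, ∃ l₁ l₂ : ℕ, 1 ≤ l₁ ∧ l₁ ≤ L ∧ 1 ≤ l₂ ∧ l₂ ≤ L ∧
      component σ x = rectC a l₁ l₂ := by
  have hx0 : gp x 0 0 ∈ σ := by rwa [gp_zero]
  obtain ⟨lo₁, hi₁, hlo₁, hhi₁, hw₁, hrow0, halt₁⟩ :=
    interval_structure (L := L) (P := fun i => gp x i 0 ∈ σ)
      (fun i k => by simp only [gp_period]) hx0
  obtain ⟨lo₂, hi₂, hlo₂, hhi₂, hw₂, hcol0, halt₂⟩ :=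
    interval_structure (L := L) (P := fun j => gp x 0 j ∈ σ)
      (fun j k => by simp only [gp_period_v]) hx0
  have hfill : ∀ i j, lo₁ ≤ i → i ≤ hi₁ → lo₂ ≤ j → j ≤ hi₂ → gp x i j ∈ σ :=
    fill hK hlo₁ hhi₁ hlo₂ hhi₂ hrow0 hcol0
  -- right boundary
  have hRt : ∀ j, lo₂ ≤ j → j ≤ hi₂ → gp x (hi₁ + 1) j ∈ σ →
      ∃ i', lo₁ ≤ i' ∧ i' ≤ hi₁ ∧ gp x (hi₁ + 1) j = gp x i' j := by
    intro j hj1 hj2 hmem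
    rcases halt₁ with hwide | ⟨he1, he2⟩
    · refine ⟨lo₁, le_refl _, by omega, ?_⟩
      rw [show hi₁ + 1 = lo₁ + 1 * (L : ℤ) by omega, gp_period]
    · exfalso
      refine boundary_empty_col' hK (Or.inl rfl) hlo₂ hhi₂ (fun j' h1 h2 => ?_) he2 j hj1 hj2 hmem
      rw [show hi₁ + 1 - 1 = hi₁ by ring]
      exact hfill hi₁ j' (by omega) le_rfl h1 h2
  have hLt : ∀ j, lo₂ ≤ j → j ≤ hi₂ → gp x (lo₁ - 1) j ∈ σ →
      ∃ i', lo₁ ≤ i' ∧ i' ≤ hi₁ ∧ gp x (lo₁ - 1) j = gp x i' j := by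
    intro j hj1 hj2 hmem
    rcases halt₁ with hwide | ⟨he1, he2⟩
    · refine ⟨hi₁, by omega, le_refl _, ?_⟩
      rw [show lo₁ - 1 = hi₁ + (-1) * (L : ℤ) by omega, gp_period]
    · exfalso
      refine boundary_empty_col' hK (Or.inr rfl) hlo₂ hhi₂ (fun j' h1 h2 => ?_) he1 j hj1 hj2 hmem
      rw [show lo₁ - 1 - (-1) = lo₁ by ring]
      exact hfill lo₁ j' le_rfl (by omega) h1 h2
  have hTp : ∀ i, lo₁ ≤ i → i ≤ hi₁ → gp x i (hi₂ + 1) ∈ σ →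
      ∃ j', lo₂ ≤ j' ∧ j' ≤ hi₂ ∧ gp x i (hi₂ + 1) = gp x i j' := by
    intro i hi1 hi2 hmem
    rcases halt₂ with hwide | ⟨he1, he2⟩
    · refine ⟨lo₂, le_refl _, by omega, ?_⟩
      rw [show hi₂ + 1 = lo₂ + 1 * (L : ℤ) by omega, gp_period_v]
    · exfalso
      refine boundary_empty_row' hK (Or.inl rfl) hlo₁ hhi₁ (fun i' h1 h2 => ?_) he2 i hi1 hi2 hmem
      rw [show hi₂ + 1 - 1 = hi₂ by ring]
      exact hfill i' hi₂ h1 h2 (by omega) le_rfl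
  have hBt : ∀ i, lo₁ ≤ i → i ≤ hi₁ → gp x i (lo₂ - 1) ∈ σ →
      ∃ j', lo₂ ≤ j' ∧ j' ≤ hi₂ ∧ gp x i (lo₂ - 1) = gp x i j' := by
    intro i hi1 hi2 hmem
    rcases halt₂ with hwide | ⟨he1, he2⟩
    · refine ⟨hi₂, by omega, le_refl _, ?_⟩
      rw [show lo₂ - 1 = hi₂ + (-1) * (L : ℤ) by omega, gp_period_v]
    · exfalso
      refine boundary_empty_row' hK (Or.inr rfl) hlo₁ hhi₁ (fun i' h1 h2 => ?_) he1 i hi1 hi2 hmem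
      rw [show lo₂ - 1 - (-1) = lo₂ by ring]
      exact hfill i' lo₂ h1 h2 le_rfl (by omega)
  -- the index predicate
  set R : Site L → Prop := fun y =>
    ∃ i j : ℤ, lo₁ ≤ i ∧ i ≤ hi₁ ∧ lo₂ ≤ j ∧ j ≤ hi₂ ∧ y = gp x i j with hRdef
  have hC1 : ∀ y, R y → y ∈ σ := by
    rintro y ⟨i, j, h1, h2, h3, h4, rfl⟩
    exact hfill i j h1 h2 h3 h4
  have hC2 : ∀ y, R y → ConnectedIn σ x y := by
    rintro y ⟨i, j, h1, h2, h3, h4, rfl⟩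
    have conn1 : ConnectedIn σ (gp x 0 0) (gp x i 0) := by
      rcases le_or_gt 0 i with h5 | h5
      · have key := conn_horiz (σ := σ) (Or.inl rfl) 0 0 i.toNat (fun m hm => by
          rw [show (0 : ℤ) + 1 * (m : ℤ) = m by ring]
          exact hrow0 m (by omega) (by omega))
        rwa [show (0 : ℤ) + 1 * (i.toNat : ℤ) = i by omega] at key
      · have key := conn_horiz (σ := σ) (Or.inr rfl) 0 0 (-i).toNat (fun m hm => by
          have h6 : lo₁ ≤ 0 + (-1 : ℤ) * m := by omega
          exact hrow0 _ h6 (by omega))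
        rwa [show (0 : ℤ) + (-1) * ((-i).toNat : ℤ) = i by omega] at key
    have conn2 : ConnectedIn σ (gp x i 0) (gp x i j) := by
      rcases le_or_gt 0 j with h5 | h5
      · have key := conn_vert (σ := σ) (Or.inl rfl) i 0 j.toNat (fun m hm => by
          rw [show (0 : ℤ) + 1 * (m : ℤ) = m by ring]
          exact hfill i m h1 h2 (by omega) (by omega))
        rwa [show (0 : ℤ) + 1 * (j.toNat : ℤ) = j by omega] at key
      · have key := conn_vert (σ := σ) (Or.inr rfl) i 0 (-j).toNat (fun m hm => by
          have h6 : lo₂ ≤ 0 + (-1 : ℤ) * m := by omega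
          exact hfill i _ h1 h2 h6 (by omega))
        rwa [show (0 : ℤ) + (-1) * ((-j).toNat : ℤ) = j by omega] at key
    have := conn1.trans conn2
    rwa [gp_zero] at this
  have hC3 : ∀ y, ConnectedIn σ x y → R y := by
    intro y hconn
    induction hconn with
    | refl => exact ⟨0, 0, hlo₁, hhi₁, hlo₂, hhi₂, (gp_zero x).symm⟩
    | tail _ step ih =>
      obtain ⟨i, j, h1, h2, h3, h4, rfl⟩ := ih
      obtain ⟨hbσ, hcσ, hadj⟩ := step
      rcases siteAdj_gp_iff.mp hadj with rfl | rfl | rfl | rfl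
      · rcases le_or_gt (i + 1) hi₁ with h5 | h5
        · exact ⟨i + 1, j, by omega, h5, h3, h4, rfl⟩
        · have hieq : i = hi₁ := by omega
          subst hieq
          obtain ⟨i', hi'1, hi'2, heq⟩ := hRt j h3 h4 hcσ
          exact ⟨i', j, hi'1, hi'2, h3, h4, heq⟩
      · rcases le_or_gt lo₁ (i - 1) with h5 | h5
        · exact ⟨i - 1, j, h5, by omega, h3, h4, rfl⟩
        · have hieq : i = lo₁ := by omega
          subst hieq
          obtain ⟨i', hi'1, hi'2, heq⟩ := hLt j h3 h4 hcσ
          exact ⟨i', j, hi'1, hi'2, h3, h4, heq⟩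
      · rcases le_or_gt (j + 1) hi₂ with h5 | h5
        · exact ⟨i, j + 1, h1, h2, by omega, h5, rfl⟩
        · have hjeq : j = hi₂ := by omega
          subst hjeq
          obtain ⟨j', hj'1, hj'2, heq⟩ := hTp i h1 h2 hcσ
          exact ⟨i, j', h1, h2, hj'1, hj'2, heq⟩
      · rcases le_or_gt lo₂ (j - 1) with h5 | h5
        · exact ⟨i, j - 1, h1, h2, h5, by omega, rfl⟩
        · have hjeq : j = lo₂ := by omega
          subst hjeq
          obtain ⟨j', hj'1, hj'2, heq⟩ := hBt i h1 h2 hcσ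
          exact ⟨i, j', h1, h2, hj'1, hj'2, heq⟩
  refine ⟨gp x lo₁ lo₂, (hi₁ - lo₁ + 1).toNat, (hi₂ - lo₂ + 1).toNat, by omega, by omega,
    by omega, by omega, ?_⟩
  ext y
  simp only [component, Finset.mem_filter]
  constructor
  · rintro ⟨hyσ, hyconn⟩
    obtain ⟨i, j, h1, h2, h3, h4, rfl⟩ := hC3 _ hyconn
    rw [mem_rectC]
    refine ⟨(i - lo₁).toNat, (j - lo₂).toNat, by omega, by omega, ?_⟩
    rw [← gp_corner_add]
    congr 1 <;> omega
  · intro hy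
    rw [mem_rectC] at hy
    obtain ⟨p₁, p₂, h1, h2, rfl⟩ := hy
    rw [← gp_corner_add]
    have hR' : R (gp x (lo₁ + (p₁ : ℤ)) (lo₂ + (p₂ : ℤ))) :=
      ⟨lo₁ + p₁, lo₂ + p₂, by omega, by omega, by omega, by omega, rfl⟩
    exact ⟨hC1 _ hR', hC2 _ hR'⟩

end Comb

lemma isolated_components_aux {L : ℕ} {σ : Config L} {x y : Site L}
    (hnc : ¬ ConnectedIn σ x y) : Isolated (component σ x) (component σ y) := by
  intro u hu v hv hadj
  simp only [component, Finset.mem_filter] at hu hv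
  exact hnc ((hu.2.trans (Relation.ReflTransGen.single ⟨hu.1, hv.1, hadj⟩)).trans
    (connectedIn_symm hv.2))

theorem aniso_local_min_is_union_of_isolated_rectangles (L : ℕ) [NeZero L] (JH JV h : ℝ)
    (hJHV : JV < JH) (hh0 : 0 < h) (hh : h < 2 * JV)
    (σ : Config L)
    (hmin : ∀ x : Site L, HA JH JV h σ < HA JH JV h (flipSpin σ x)) :
    (∀ x ∈ σ, ∃ a : Site L, ∃ l₁ l₂ : ℕ,
        1 ≤ l₁ ∧ l₁ ≤ L ∧ 1 ≤ l₂ ∧ l₂ ≤ L ∧ component σ x = rectC a l₁ l₂) ∧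
    (∀ x ∈ σ, ∀ y ∈ σ, ¬ ConnectedIn σ x y →
        Isolated (component σ x) (component σ y)) := by
  have hK : NoCorner σ := noCorner_of_localMin hJHV hh0 hh hmin
  constructor
  · intro x hxσ
    exact component_eq_rect hK hxσ
  · intro x hxσ y hyσ hnc
    exact isolated_components_aux hnc
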